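/- Key per-step strongly convex inequality (Eq. (23)). Let S ≥ 1, μ > 0, L ≥ 0, η > 0, and let f_1, …, f_S : ℝ^d → ℝ each be differentiable with L-Lipschitz gradient and μ-strongly convex. Let λ ∈ Δ_S, let u_1, …, u_S ∈ ℝ^d, set d := Σ_{s=1}^S λ_s·u_s, and let x, x* ∈ ℝ^d and x' := x − η·d. Then Σ_{s=1}^S λ_s·(f_s(x') − f_s(x*)) ≤ (1/(2η))·((1 − 3μη/4)·‖x − x*‖² − ‖x' − x*‖²) − (η/2 − μ·η²/8 − L·η²/2)·‖d‖² + (4/μ)·Σ_{s=1}^S λ_s·‖∇f_s(x) − u_s‖². -/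

import Mathlib

open scoped RealInnerProductSpace BigOperators

private lemma young_ineq (μ a b : ℝ) (hμ : 0 < μ) : a * b ≤ 2 / μ * a ^ 2 + μ / 8 * b ^ 2 := by
  rw [← sub_nonneg]
  have h : 2 / μ * a ^ 2 + μ / 8 * b ^ 2 - a * b = (4 * a - μ * b) ^ 2 / (8 * μ) := by
    field_simp; ring
  rw [h]; positivity

private lemma sq_norm_convexOn {F : Type*} [NormedAddCommGroup F] [InnerProductSpace ℝ F] :
    ConvexOn ℝ (Set.univ : Set F) (fun z => ‖z‖ ^ 2) := by
  refine ⟨convex_univ, ?_⟩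
  intro p _ q _ a b ha hb hab
  simp only [smul_eq_mul]
  have hexp : ‖a • p + b • q‖ ^ 2
      = a ^ 2 * ‖p‖ ^ 2 + 2 * (a * b) * ⟪p, q⟫ + b ^ 2 * ‖q‖ ^ 2 := by
    rw [norm_add_sq_real, real_inner_smul_left, real_inner_smul_right, norm_smul, norm_smul,
      Real.norm_eq_abs, Real.norm_eq_abs, abs_of_nonneg ha, abs_of_nonneg hb]
    ring
  nlinarith [mul_nonneg (mul_nonneg ha hb) (sq_nonneg (‖p‖ - ‖q‖)),
    mul_le_mul_of_nonneg_left (real_inner_le_norm p q) (mul_nonneg ha hb)]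

private lemma descent_aux {F : Type*} [NormedAddCommGroup F] [InnerProductSpace ℝ F]
    [CompleteSpace F] (f : F → ℝ) (L : ℝ) (hdiff : Differentiable ℝ f)
    (hlip : ∀ a b : F, ‖gradient f a - gradient f b‖ ≤ L * ‖a - b‖) (x y : F) :
    f y ≤ f x + ⟪gradient f x, y - x⟫ + L / 2 * ‖y - x‖ ^ 2 := by
  set v := y - x with hv
  have key : ∀ t : ℝ, HasDerivAt (fun t : ℝ => f (x + t • v)) ⟪gradient f (x + t • v), v⟫ t := by
    intro t
    have h1 : HasDerivAt (fun t : ℝ => x + t • v) v t := by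
      simpa using ((hasDerivAt_id t).smul_const v).const_add x
    have h2 : HasFDerivAt f (InnerProductSpace.toDual ℝ F (gradient f (x + t • v)))
        (x + t • v) := (hdiff _).hasGradientAt.hasFDerivAt
    have h3 := h2.comp_hasDerivAt t h1
    rw [InnerProductSpace.toDual_apply_apply] at h3
    exact h3
  set c := ⟪gradient f x, v⟫ with hc
  set k := ‖v‖ ^ 2 with hk
  have hB' : ∀ t : ℝ, HasDerivAt (fun t : ℝ => f x + t * c + L / 2 * t ^ 2 * k)
      (c + L * t * k) t := by
    intro t
    have h1 : HasDerivAt (fun t : ℝ => f x + t * c) c t := by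
      simpa using ((hasDerivAt_id t).mul_const c).const_add (f x)
    have h2 : HasDerivAt (fun t : ℝ => L / 2 * t ^ 2 * k) (L / 2 * (2 * t ^ 1) * k) t := by
      exact (((hasDerivAt_pow 2 t)).const_mul (L / 2)).mul_const k
    have := h1.add h2
    exact this.congr_deriv (by ring)
  have bound : ∀ t ∈ Set.Ico (0 : ℝ) 1,
      ⟪gradient f (x + t • v), v⟫ ≤ c + L * t * k := by
    intro t ht
    have h1 : ⟪gradient f (x + t • v) - gradient f x, v⟫ ≤ L * t * k := by
      calc ⟪gradient f (x + t • v) - gradient f x, v⟫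
          ≤ ‖gradient f (x + t • v) - gradient f x‖ * ‖v‖ := real_inner_le_norm _ _
        _ ≤ (L * ‖(x + t • v) - x‖) * ‖v‖ :=
            mul_le_mul_of_nonneg_right (hlip _ _) (norm_nonneg v)
        _ = L * t * k := by
            have : (x + t • v) - x = t • v := by abel
            rw [this, norm_smul, Real.norm_eq_abs, abs_of_nonneg ht.1, hk]
            ring
    rw [inner_sub_left] at h1
    linarith
  have main := image_le_of_deriv_right_le_deriv_boundary
    (f := fun t : ℝ => f (x + t • v)) (f' := fun t => ⟪gradient f (x + t • v), v⟫)
    (a := (0 : ℝ)) (b := 1)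
    (fun t _ => (key t).continuousAt.continuousWithinAt)
    (fun t _ => (key t).hasDerivWithinAt)
    (B := fun t => f x + t * c + L / 2 * t ^ 2 * k)
    (B' := fun t => c + L * t * k)
    (by simp) (fun t _ => (hB' t).continuousAt.continuousWithinAt)
    (fun t _ => (hB' t).hasDerivWithinAt) bound
  have h1 := main (Set.right_mem_Icc.2 zero_le_one)
  have hy : x + (1 : ℝ) • v = y := by rw [one_smul, hv]; abel
  rw [hy] at h1
  linarith

/-- Key per-step strongly convex inequality (Eq. (23)) in the proof of Theorem 2. -/
theorem stimulus_strongly_convex_step {d : ℕ} (S : ℕ) (hS : 1 ≤ S) (μ L η : ℝ)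
    (hμ : 0 < μ) (hL : 0 ≤ L) (hη : 0 < η)
    (f : Fin S → EuclideanSpace ℝ (Fin d) → ℝ)
    (hdiff : ∀ s, Differentiable ℝ (f s))
    (hlip : ∀ s, ∀ x y : EuclideanSpace ℝ (Fin d),
      ‖gradient (f s) x - gradient (f s) y‖ ≤ L * ‖x - y‖)
    (hsc : ∀ s, ∀ x y : EuclideanSpace ℝ (Fin d),
      f s y ≥ f s x + ⟪gradient (f s) x, y - x⟫ + (μ / 2) * ‖y - x‖ ^ 2)
    (lam : Fin S → ℝ) (hlam_nonneg : ∀ s, 0 ≤ lam s) (hlam_sum : ∑ s : Fin S, lam s = 1)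
    (u : Fin S → EuclideanSpace ℝ (Fin d))
    (dvec : EuclideanSpace ℝ (Fin d)) (hdvec : dvec = ∑ s : Fin S, lam s • u s)
    (x xstar x' : EuclideanSpace ℝ (Fin d)) (hx' : x' = x - η • dvec) :
    ∑ s : Fin S, lam s * (f s x' - f s xstar)
      ≤ (1 / (2 * η)) * ((1 - 3 * μ * η / 4) * ‖x - xstar‖ ^ 2 - ‖x' - xstar‖ ^ 2)
        - (η / 2 - μ * η ^ 2 / 8 - L * η ^ 2 / 2) * ‖dvec‖ ^ 2
        + (4 / μ) * ∑ s : Fin S, lam s * ‖gradient (f s) x - u s‖ ^ 2 := by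
  set E : EuclideanSpace ℝ (Fin d) := ∑ s : Fin S, lam s • (gradient (f s) x - u s) with hE
  have hEdef : (∑ s : Fin S, lam s • gradient (f s) x) = dvec + E := by
    rw [hdvec, hE, ← Finset.sum_add_distrib]
    refine Finset.sum_congr rfl fun s _ => ?_
    rw [smul_sub]; abel
  have step1 : ∀ s : Fin S, f s x' - f s xstar
      ≤ ⟪gradient (f s) x, x' - xstar⟫ - μ / 2 * ‖x - xstar‖ ^ 2 + L / 2 * ‖x' - x‖ ^ 2 := by
    intro s
    have h1 := descent_aux (f s) L (hdiff s) (hlip s) x x'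
    have h2 := hsc s x xstar
    have h3 : ⟪gradient (f s) x, x' - x⟫ - ⟪gradient (f s) x, xstar - x⟫
        = ⟪gradient (f s) x, x' - xstar⟫ := by
      rw [← inner_sub_right]; congr 1; abel
    have h4 : ‖xstar - x‖ = ‖x - xstar‖ := norm_sub_rev _ _
    rw [h4] at h2
    linarith
  have step2 : ∑ s : Fin S, lam s * (f s x' - f s xstar)
      ≤ ⟪∑ s : Fin S, lam s • gradient (f s) x, x' - xstar⟫
        - μ / 2 * ‖x - xstar‖ ^ 2 + L / 2 * ‖x' - x‖ ^ 2 := by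
    have h1 : ∑ s : Fin S, lam s * (f s x' - f s xstar)
        ≤ ∑ s : Fin S, lam s * (⟪gradient (f s) x, x' - xstar⟫
            - μ / 2 * ‖x - xstar‖ ^ 2 + L / 2 * ‖x' - x‖ ^ 2) :=
      Finset.sum_le_sum fun s _ => mul_le_mul_of_nonneg_left (step1 s) (hlam_nonneg s)
    have h2 : ∑ s : Fin S, lam s * (⟪gradient (f s) x, x' - xstar⟫
          - μ / 2 * ‖x - xstar‖ ^ 2 + L / 2 * ‖x' - x‖ ^ 2)
        = ⟪∑ s : Fin S, lam s • gradient (f s) x, x' - xstar⟫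
          - μ / 2 * ‖x - xstar‖ ^ 2 + L / 2 * ‖x' - x‖ ^ 2 := by
      rw [sum_inner]
      simp only [real_inner_smul_left, mul_sub, mul_add]
      rw [Finset.sum_add_distrib, Finset.sum_sub_distrib, ← Finset.sum_mul, ← Finset.sum_mul,
        hlam_sum, one_mul, one_mul]
    exact h1.trans_eq h2
  have hx'x : ‖x' - x‖ ^ 2 = η ^ 2 * ‖dvec‖ ^ 2 := by
    have h : x' - x = -(η • dvec) := by rw [hx']; abel
    rw [h, norm_neg, norm_smul, Real.norm_eq_abs, abs_of_nonneg hη.le, mul_pow]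
  have hprev : x' - xstar = (x - xstar) - η • dvec := by rw [hx']; abel
  have hsplit : ⟪∑ s : Fin S, lam s • gradient (f s) x, x' - xstar⟫
      = ⟪dvec, x' - xstar⟫ + ⟪E, x' - xstar⟫ := by
    rw [hEdef, inner_add_left]
  have hpolar : ⟪dvec, x' - xstar⟫
      = 1 / (2 * η) * (‖x - xstar‖ ^ 2 - ‖x' - xstar‖ ^ 2) - η / 2 * ‖dvec‖ ^ 2 := by
    have h1 : ‖x' - xstar‖ ^ 2
        = ‖x - xstar‖ ^ 2 - 2 * η * ⟪dvec, x - xstar⟫ + η ^ 2 * ‖dvec‖ ^ 2 := by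
      rw [hprev, norm_sub_sq_real, real_inner_smul_right, norm_smul, Real.norm_eq_abs,
        abs_of_nonneg hη.le, real_inner_comm]
      ring
    have h2 : ⟪dvec, x' - xstar⟫ = ⟪dvec, x - xstar⟫ - η * ‖dvec‖ ^ 2 := by
      rw [hprev, inner_sub_right, real_inner_smul_right, real_inner_self_eq_norm_sq]
    rw [h2, h1]
    have hne : η ≠ 0 := hη.ne'
    generalize ⟪dvec, x - xstar⟫ = I
    field_simp
    ring
  have hEyoung : ⟪E, x' - xstar⟫
      ≤ 4 / μ * ‖E‖ ^ 2 + μ / 8 * ‖x - xstar‖ ^ 2 + μ * η ^ 2 / 8 * ‖dvec‖ ^ 2 := by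
    have hsum : ⟪E, x' - xstar⟫ = ⟪E, x - xstar⟫ + ⟪E, -(η • dvec)⟫ := by
      rw [hprev, sub_eq_add_neg, inner_add_right]
    have y1 : ⟪E, x - xstar⟫ ≤ 2 / μ * ‖E‖ ^ 2 + μ / 8 * ‖x - xstar‖ ^ 2 :=
      (real_inner_le_norm _ _).trans (young_ineq μ _ _ hμ)
    have y2 : ⟪E, -(η • dvec)⟫ ≤ 2 / μ * ‖E‖ ^ 2 + μ / 8 * (η * ‖dvec‖) ^ 2 := by
      refine (real_inner_le_norm _ _).trans ?_
      rw [norm_neg, norm_smul, Real.norm_eq_abs, abs_of_nonneg hη.le]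
      exact young_ineq μ _ _ hμ
    have hsq : (η * ‖dvec‖) ^ 2 = η ^ 2 * ‖dvec‖ ^ 2 := by ring
    rw [hsq] at y2
    rw [hsum]
    calc ⟪E, x - xstar⟫ + ⟪E, -(η • dvec)⟫
        ≤ (2 / μ * ‖E‖ ^ 2 + μ / 8 * ‖x - xstar‖ ^ 2)
          + (2 / μ * ‖E‖ ^ 2 + μ / 8 * (η ^ 2 * ‖dvec‖ ^ 2)) := add_le_add y1 y2
      _ = 4 / μ * ‖E‖ ^ 2 + μ / 8 * ‖x - xstar‖ ^ 2 + μ * η ^ 2 / 8 * ‖dvec‖ ^ 2 := by ring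
  have hJensen : ‖E‖ ^ 2 ≤ ∑ s : Fin S, lam s * ‖gradient (f s) x - u s‖ ^ 2 := by
    have := sq_norm_convexOn.map_sum_le (t := Finset.univ) (w := lam)
      (p := fun s => gradient (f s) x - u s)
      (fun s _ => hlam_nonneg s) hlam_sum (fun s _ => Set.mem_univ _)
    simpa [hE, smul_eq_mul] using this
  have hJ : 4 / μ * ‖E‖ ^ 2 ≤ 4 / μ * ∑ s : Fin S, lam s * ‖gradient (f s) x - u s‖ ^ 2 :=
    mul_le_mul_of_nonneg_left hJensen (by positivity)
  have hrw : 1 / (2 * η) * ((1 - 3 * μ * η / 4) * ‖x - xstar‖ ^ 2 - ‖x' - xstar‖ ^ 2)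
      = 1 / (2 * η) * (‖x - xstar‖ ^ 2 - ‖x' - xstar‖ ^ 2) - 3 * μ / 8 * ‖x - xstar‖ ^ 2 := by
    have hne : η ≠ 0 := hη.ne'
    field_simp
    ring
  rw [hrw]
  rw [hsplit, hpolar, hx'x] at step2
  linarith
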